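/- arXiv:1601.00207 — 3 statements merged into one kernel-verified Lean document; each statement's English description precedes it below -/
import Mathlib

section
/- Let α be a unit-magnitude complex number such that 1, α, α², α³ are pairwise non-±-equal, and let U = {1, α, α², α³}. Then R(U) is a subring of ℂ (it contains 0 and 1 and is closed under addition, negation, and multiplication). -/
open Complex

/-- The bracket `[x,y] = x * conj y - y * conj x`. -/
noncomputable def brkt (x y : ℂ) : ℂ := x * (starRingEnd ℂ) y - y * (starRingEnd ℂ) x

/-- `lineInt α β p q` is the intersection point `I_{α,β}(p,q)` of the line through `p`
with direction `α` and the line through `q` with direction `β` (for unit `α ≠ ±β`),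
given by the formula of Buhler et al. -/
noncomputable def lineInt (α β p q : ℂ) : ℂ :=
  brkt α p / brkt α β * β + brkt β q / brkt β α * α

/-- The sets `S n` in the inductive construction. -/
def stepSet (U : Set ℂ) : ℕ → Set ℂ
  | 0 => {0, 1}
  | n + 1 => {z | ∃ α ∈ U, ∃ β ∈ U, α ≠ β ∧ α ≠ -β ∧
      ∃ p ∈ stepSet U n, ∃ q ∈ stepSet U n, z = lineInt α β p q}

/-- `RU U = ⋃ n, S n`. -/
def RU (U : Set ℂ) : Set ℂ := ⋃ n, stepSet U n

/-- Elementary monomials of `U`. -/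
def IsElem (U : Set ℂ) (z : ℂ) : Prop :=
  ∃ α ∈ U, ∃ β ∈ U, α ≠ β ∧ α ≠ -β ∧ z = lineInt α β 0 1

/-- Monomials of `U`, defined inductively. -/
inductive IsMonomial (U : Set ℂ) : ℂ → Prop
  | elementary (α β : ℂ) (hα : α ∈ U) (hβ : β ∈ U) (h1 : α ≠ β) (h2 : α ≠ -β) :
      IsMonomial U (lineInt α β 0 1)
  | step (α β m : ℂ) (hα : α ∈ U) (hβ : β ∈ U) (h1 : α ≠ β) (h2 : α ≠ -β)
      (hm : IsMonomial U m) : IsMonomial U (lineInt α β 0 m)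

/-- `P`: the real numbers arising as length-two monomials `I_{γ,δ}(0,z)` on the real axis. -/
def projSet (U : Set ℂ) : Set ℝ :=
  {r | ∃ γ ∈ U, ∃ δ ∈ U, γ ≠ δ ∧ γ ≠ -δ ∧ ∃ z, IsElem U z ∧ (r : ℂ) = lineInt γ δ 0 z}

/-- `m` is a `ℤ[P]`-linear combination of elementary monomials of `U`. -/
def IsZPComb (U : Set ℂ) (m : ℂ) : Prop :=
  ∃ (n : ℕ) (c : Fin n → ℝ) (z : Fin n → ℂ),
    (∀ i, c i ∈ Subring.closure (projSet U)) ∧ (∀ i, IsElem U (z i)) ∧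
    m = ∑ i, (c i : ℂ) * z i

namespace Stmt17

structure Nice (α : ℂ) : Prop where
  habs : ‖α‖ = 1
  h1a : α ≠ 1
  h1a' : α ≠ -1
  h1b : α ^ 2 ≠ 1
  h1b' : α ^ 2 ≠ -1
  h1c : α ^ 3 ≠ 1
  h1c' : α ^ 3 ≠ -1
  hab : α ≠ α ^ 2
  hab' : α ≠ -α ^ 2
  hac : α ≠ α ^ 3
  hac' : α ≠ -α ^ 3
  hbc : α ^ 2 ≠ α ^ 3
  hbc' : α ^ 2 ≠ -α ^ 3

def Uα (α : ℂ) : Set ℂ := {1, α, α ^ 2, α ^ 3}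

variable {α : ℂ}

lemma Nice.ne0 (h : Nice α) : α ≠ 0 := by
  intro e
  have := h.habs
  rw [e] at this
  simp at this

lemma Nice.conj_eq (h : Nice α) : (starRingEnd ℂ) α = α⁻¹ := by
  have h1 : α * (starRingEnd ℂ) α = 1 := by
    rw [Complex.mul_conj]
    norm_cast
    rw [Complex.normSq_eq_norm_sq, h.habs]; norm_num
  field_simp [h.ne0] at h1 ⊢
  linear_combination h1

/-- pairwise distinctness of powers -/
lemma Nice.pow_ne (h : Nice α) : ∀ j k : ℕ, j ≤ 3 → k ≤ 3 → j ≠ k → α ^ j ≠ α ^ k := by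
  intro j k hj hk hjk
  interval_cases j <;> interval_cases k <;>
    first
    | exact (hjk rfl).elim
    | (intro e; first
        | exact h.h1a (by linear_combination e)
        | exact h.h1a (by linear_combination -e)
        | exact h.h1b (by linear_combination e)
        | exact h.h1b (by linear_combination -e)
        | exact h.h1c (by linear_combination e)
        | exact h.h1c (by linear_combination -e)
        | exact h.hab (by linear_combination e)
        | exact h.hab (by linear_combination -e)
        | exact h.hac (by linear_combination e)
        | exact h.hac (by linear_combination -e)
        | exact h.hbc (by linear_combination e)
        | exact h.hbc (by linear_combination -e))

lemma Nice.pow_ne_neg (h : Nice α) : ∀ j k : ℕ, j ≤ 3 → k ≤ 3 → j ≠ k → α ^ j ≠ -α ^ k := by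
  intro j k hj hk hjk
  interval_cases j <;> interval_cases k <;>
    first
    | exact (hjk rfl).elim
    | (intro e; first
        | exact h.h1a' (by linear_combination e)
        | exact h.h1a' (by linear_combination -e)
        | exact h.h1b' (by linear_combination e)
        | exact h.h1b' (by linear_combination -e)
        | exact h.h1c' (by linear_combination e)
        | exact h.h1c' (by linear_combination -e)
        | exact h.hab' (by linear_combination e)
        | exact h.hab' (by linear_combination -e)
        | exact h.hac' (by linear_combination e)
        | exact h.hac' (by linear_combination -e)
        | exact h.hbc' (by linear_combination e)
        | exact h.hbc' (by linear_combination -e))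

lemma brkt_zero_right (x : ℂ) : brkt x 0 = 0 := by simp [brkt]

lemma brkt_anti (x y : ℂ) : brkt y x = -brkt x y := by unfold brkt; ring

lemma lineInt_zero_left (a b q : ℂ) : lineInt a b 0 q = brkt b q / brkt b a * a := by
  simp [lineInt, brkt]

lemma lineInt_add (a b p q p' q' : ℂ) :
    lineInt a b (p + p') (q + q') = lineInt a b p q + lineInt a b p' q' := by
  simp only [lineInt, brkt, map_add]
  ring

lemma lineInt_smul (a b p q r : ℂ) (hr : (starRingEnd ℂ) r = r) :
    lineInt a b (r * p) (r * q) = r * lineInt a b p q := by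
  simp only [lineInt, brkt, map_mul, hr]
  ring

lemma lineInt_neg (a b p q : ℂ) :
    lineInt a b (-p) (-q) = - lineInt a b p q := by
  simp only [lineInt, brkt, map_neg]
  ring

lemma lineInt_diag (a b w : ℂ) (hD : brkt a b ≠ 0) : lineInt a b w w = w := by
  have hD' : brkt b a ≠ 0 := by rw [brkt_anti]; simpa using hD
  rw [lineInt, div_mul_eq_mul_div, div_mul_eq_mul_div, div_add_div _ _ hD hD',
    div_eq_iff (mul_ne_zero hD hD')]
  simp only [brkt]
  ring


lemma Nice.brkt_ne (h : Nice α) {j k : ℕ} (hj : j ≤ 3) (hk : k ≤ 3) (hjk : j ≠ k) :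
    brkt (α ^ j) (α ^ k) ≠ 0 := by
  have h0 : α ≠ 0 := h.ne0
  have key : brkt (α ^ j) (α ^ k) * α ^ (j + k) = (α ^ j - α ^ k) * (α ^ j + α ^ k) := by
    simp only [brkt, map_pow, h.conj_eq, inv_pow]
    field_simp
    ring
  intro hz
  rw [hz, zero_mul] at key
  rcases mul_eq_zero.1 key.symm with h2 | h2
  · exact h.pow_ne j k hj hk hjk (by linear_combination h2)
  · exact h.pow_ne_neg j k hj hk hjk (by linear_combination h2)

lemma mem_Uα {k : ℕ} (hk : k ≤ 3) : α ^ k ∈ Uα α := by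
  interval_cases k <;> simp [Uα]

lemma Uα_elim {x : ℂ} (hx : x ∈ Uα α) : ∃ k, k ≤ 3 ∧ x = α ^ k := by
  rcases hx with rfl | rfl | rfl | rfl
  · exact ⟨0, by norm_num⟩
  · exact ⟨1, by norm_num⟩
  · exact ⟨2, by norm_num⟩
  · exact ⟨3, by norm_num⟩

lemma mem_stepSet_succ {U : Set ℂ} {z : ℂ} {n : ℕ} :
    z ∈ stepSet U (n + 1) ↔ ∃ a ∈ U, ∃ b ∈ U, a ≠ b ∧ a ≠ -b ∧
      ∃ p ∈ stepSet U n, ∃ q ∈ stepSet U n, z = lineInt a b p q := Iff.rfl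

lemma mem_stepSet_zero {U : Set ℂ} {z : ℂ} : z ∈ stepSet U 0 ↔ z = 0 ∨ z = 1 := by
  simp [stepSet]

lemma Nice.aa2 (h : Nice α) : (α : ℂ) ∈ Uα α ∧ α ^ 2 ∈ Uα α := by
  constructor <;> simp [Uα]

lemma Nice.stepSet_mono (h : Nice α) : ∀ n, stepSet (Uα α) n ⊆ stepSet (Uα α) (n + 1) := by
  intro n
  induction n with
  | zero =>
    intro z hz
    rcases mem_stepSet_zero.1 hz with rfl | rfl
    · refine mem_stepSet_succ.2 ⟨α, h.aa2.1, α ^ 2, h.aa2.2, h.hab, h.hab', 0, ?_, 0, ?_, ?_⟩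
      · exact mem_stepSet_zero.2 (Or.inl rfl)
      · exact mem_stepSet_zero.2 (Or.inl rfl)
      · simp [lineInt, brkt]
    · refine mem_stepSet_succ.2 ⟨α, h.aa2.1, α ^ 2, h.aa2.2, h.hab, h.hab', 1, ?_, 1, ?_, ?_⟩
      · exact mem_stepSet_zero.2 (Or.inr rfl)
      · exact mem_stepSet_zero.2 (Or.inr rfl)
      · refine (lineInt_diag _ _ _ ?_).symm
        simpa using h.brkt_ne (j := 1) (k := 2) (by norm_num) (by norm_num) (by norm_num)
  | succ n ih =>
    intro z hz
    obtain ⟨a, ha, b, hb, h1, h2, p, hp, q, hq, rfl⟩ := mem_stepSet_succ.1 hz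
    exact mem_stepSet_succ.2 ⟨a, ha, b, hb, h1, h2, p, ih hp, q, ih hq, rfl⟩

lemma Nice.stepSet_le (h : Nice α) {m n : ℕ} (hmn : m ≤ n) :
    stepSet (Uα α) m ⊆ stepSet (Uα α) n := by
  induction n with
  | zero => simpa [Nat.le_zero.1 hmn] using subset_rfl
  | succ n ih =>
    rcases Nat.lt_or_ge m (n + 1) with hlt | hge
    · exact (ih (Nat.lt_succ_iff.1 hlt)).trans (h.stepSet_mono n)
    · have : m = n + 1 := le_antisymm hmn hge
      simpa [this] using subset_rfl

lemma mem_RU {U : Set ℂ} {z : ℂ} : z ∈ RU U ↔ ∃ n, z ∈ stepSet U n := Set.mem_iUnion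

lemma level_mem {U : Set ℂ} {z : ℂ} {n : ℕ} (hz : z ∈ stepSet U n) : z ∈ RU U :=
  mem_RU.2 ⟨n, hz⟩

lemma zero_mem' : (0 : ℂ) ∈ RU (Uα α) := level_mem (mem_stepSet_zero.2 (Or.inl rfl))

lemma one_mem' : (1 : ℂ) ∈ RU (Uα α) := level_mem (mem_stepSet_zero.2 (Or.inr rfl))

lemma Nice.lineInt_mem (h : Nice α) {a b p q : ℂ} (ha : a ∈ Uα α) (hb : b ∈ Uα α)
    (h1 : a ≠ b) (h2 : a ≠ -b) (hp : p ∈ RU (Uα α)) (hq : q ∈ RU (Uα α)) :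
    lineInt a b p q ∈ RU (Uα α) := by
  obtain ⟨m, hm⟩ := mem_RU.1 hp
  obtain ⟨n, hn⟩ := mem_RU.1 hq
  exact level_mem (mem_stepSet_succ.2 ⟨a, ha, b, hb, h1, h2,
    p, h.stepSet_le (le_max_left m n) hm, q, h.stepSet_le (le_max_right m n) hn, rfl⟩)


lemma Nice.lineInt_eq (h : Nice α) {j k : ℕ} (hj : j ≤ 3) (hk : k ≤ 3) (hjk : j ≠ k)
    (p q v : ℂ)
    (hv : brkt (α ^ j) p * brkt (α ^ k) (α ^ j) * α ^ k
        + brkt (α ^ k) q * brkt (α ^ j) (α ^ k) * α ^ j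
        = v * (brkt (α ^ j) (α ^ k) * brkt (α ^ k) (α ^ j))) :
    lineInt (α ^ j) (α ^ k) p q = v := by
  have D : brkt (α ^ j) (α ^ k) ≠ 0 := h.brkt_ne hj hk hjk
  have D' : brkt (α ^ k) (α ^ j) ≠ 0 := h.brkt_ne hk hj hjk.symm
  rw [lineInt, div_mul_eq_mul_div, div_mul_eq_mul_div, div_add_div _ _ D D',
    div_eq_iff (mul_ne_zero D D')]
  linear_combination hv

lemma Nice.pow_lineInt_mem (h : Nice α) {j k : ℕ} (hj : j ≤ 3) (hk : k ≤ 3) (hjk : j ≠ k)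
    {p q : ℂ} (hp : p ∈ RU (Uα α)) (hq : q ∈ RU (Uα α)) :
    lineInt (α ^ j) (α ^ k) p q ∈ RU (Uα α) :=
  h.lineInt_mem (mem_Uα hj) (mem_Uα hk) (h.pow_ne j k hj hk hjk)
    (h.pow_ne_neg j k hj hk hjk) hp hq

lemma Nice.elem (h : Nice α) {j k : ℕ} (hj : j ≤ 3) (hk : k ≤ 3) (hjk : j ≠ k)
    {p q v : ℂ} (hp : p ∈ RU (Uα α)) (hq : q ∈ RU (Uα α))
    (hv : brkt (α ^ j) p * brkt (α ^ k) (α ^ j) * α ^ k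
        + brkt (α ^ k) q * brkt (α ^ j) (α ^ k) * α ^ j
        = v * (brkt (α ^ j) (α ^ k) * brkt (α ^ k) (α ^ j))) :
    v ∈ RU (Uα α) := by
  rw [← h.lineInt_eq hj hk hjk p q v hv]
  exact h.pow_lineInt_mem hj hk hjk hp hq


lemma Nice.C_ne (h : Nice α) : α + α⁻¹ ≠ 0 := by
  have h0 : α ≠ 0 := h.ne0
  intro e
  apply h.h1b'
  field_simp at e
  linear_combination e

lemma Nice.Creal (h : Nice α) : (starRingEnd ℂ) (α + α⁻¹) = α + α⁻¹ := by
  simp only [map_add, map_inv₀, h.conj_eq, inv_inv]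
  ring

lemma mem_congr {x y : ℂ} (hx : x ∈ RU (Uα α)) (e : y = x) : y ∈ RU (Uα α) := by
  rw [e]; exact hx

lemma Nice.elem_div (h : Nice α) {j k : ℕ} (hj : j ≤ 3) (hk : k ≤ 3) (hjk : j ≠ k)
    {p q w d : ℂ} (hd : d ≠ 0) (hp : p ∈ RU (Uα α)) (hq : q ∈ RU (Uα α))
    (hv : (brkt (α ^ j) p * brkt (α ^ k) (α ^ j) * α ^ k
        + brkt (α ^ k) q * brkt (α ^ j) (α ^ k) * α ^ j) * d
        = w * (brkt (α ^ j) (α ^ k) * brkt (α ^ k) (α ^ j))) :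
    w / d ∈ RU (Uα α) := by
  refine h.elem hj hk hjk hp hq ?_
  rw [div_mul_eq_mul_div, eq_div_iff hd]
  linear_combination hv

lemma Nice.E1 (h : Nice α) : (α + α⁻¹) * α ∈ RU (Uα α)  := by
  have h0 : α ≠ 0 := h.ne0
  have h1 : α * α⁻¹ = 1 := mul_inv_cancel₀ h0
  refine h.elem (j := 1) (k := 2) (by norm_num) (by norm_num) (by norm_num) zero_mem' one_mem' ?_
  simp only [brkt, map_pow, map_one, map_zero, map_add, map_mul, map_neg, map_inv₀,
    h.conj_eq, inv_inv]
  linear_combination (α ^ 2 * α⁻¹ ^ 4 + (-1:ℂ) * α ^ 3 * α⁻¹ ^ 3 + (-1:ℂ) * α ^ 4 * α⁻¹ ^ 2 + α ^ 5 * α⁻¹) * h1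

lemma Nice.E2 (h : Nice α) : -α ^ 2 ∈ RU (Uα α)  := by
  have h0 : α ≠ 0 := h.ne0
  have h1 : α * α⁻¹ = 1 := mul_inv_cancel₀ h0
  refine h.elem (j := 2) (k := 1) (by norm_num) (by norm_num) (by norm_num) zero_mem' one_mem' ?_
  simp only [brkt, map_pow, map_one, map_zero, map_add, map_mul, map_neg, map_inv₀,
    h.conj_eq, inv_inv]
  linear_combination ((-1:ℂ) * α ^ 3 * α⁻¹ ^ 3 + (2:ℂ) * α ^ 4 * α⁻¹ ^ 2 + (-1:ℂ) * α ^ 5 * α⁻¹) * h1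

lemma Nice.E3 (h : Nice α) : ((α + α⁻¹) ^ 2 - 1) * α ^ 2 ∈ RU (Uα α)  := by
  have h0 : α ≠ 0 := h.ne0
  have h1 : α * α⁻¹ = 1 := mul_inv_cancel₀ h0
  refine h.elem (j := 2) (k := 3) (by norm_num) (by norm_num) (by norm_num) zero_mem' one_mem' ?_
  simp only [brkt, map_pow, map_one, map_zero, map_add, map_mul, map_neg, map_inv₀,
    h.conj_eq, inv_inv]
  linear_combination (α ^ 4 * α⁻¹ ^ 6 + (-1:ℂ) * α ^ 5 * α⁻¹ ^ 5 + α ^ 5 * α⁻¹ ^ 7 + (-1:ℂ) * α ^ 7 * α⁻¹ ^ 3 + (-2:ℂ) * α ^ 7 * α⁻¹ ^ 5 + α ^ 8 * α⁻¹ ^ 2 + α ^ 9 * α⁻¹ ^ 3) * h1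

lemma Nice.E4 (h : Nice α) : -((α + α⁻¹) * α ^ 3) ∈ RU (Uα α)  := by
  have h0 : α ≠ 0 := h.ne0
  have h1 : α * α⁻¹ = 1 := mul_inv_cancel₀ h0
  refine h.elem (j := 3) (k := 2) (by norm_num) (by norm_num) (by norm_num) zero_mem' one_mem' ?_
  simp only [brkt, map_pow, map_one, map_zero, map_add, map_mul, map_neg, map_inv₀,
    h.conj_eq, inv_inv]
  linear_combination ((-1:ℂ) * α ^ 5 * α⁻¹ ^ 5 + α ^ 6 * α⁻¹ ^ 4 + (-1:ℂ) * α ^ 6 * α⁻¹ ^ 6 + α ^ 7 * α⁻¹ ^ 3 + α ^ 7 * α⁻¹ ^ 5 + (-1:ℂ) * α ^ 8 * α⁻¹ ^ 2 + α ^ 8 * α⁻¹ ^ 4 + (-1:ℂ) * α ^ 9 * α⁻¹ ^ 3) * h1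

lemma Nice.E5 (h : Nice α) : -((α + α⁻¹) * α) ∈ RU (Uα α)  := by
  have h0 : α ≠ 0 := h.ne0
  have h1 : α * α⁻¹ = 1 := mul_inv_cancel₀ h0
  refine h.elem (j := 1) (k := 0) (by norm_num) (by norm_num) (by norm_num) zero_mem' h.E2 ?_
  simp only [brkt, map_pow, map_one, map_zero, map_add, map_mul, map_neg, map_inv₀,
    h.conj_eq, inv_inv]
  ring

lemma Nice.neg_one (h : Nice α) : (-1 : ℂ) ∈ RU (Uα α)  := by
  have h0 : α ≠ 0 := h.ne0
  have h1 : α * α⁻¹ = 1 := mul_inv_cancel₀ h0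
  refine h.elem (j := 0) (k := 2) (by norm_num) (by norm_num) (by norm_num) zero_mem' h.E5 ?_
  simp only [brkt, map_pow, map_one, map_zero, map_add, map_mul, map_neg, map_inv₀,
    h.conj_eq, inv_inv]
  linear_combination (α⁻¹ ^ 4 + (-2:ℂ) * α ^ 2 * α⁻¹ ^ 2 + α ^ 4) * h1

lemma Nice.onepca (h : Nice α) : 1 + (α + α⁻¹) * α ∈ RU (Uα α)  := by
  have h0 : α ≠ 0 := h.ne0
  have h1 : α * α⁻¹ = 1 := mul_inv_cancel₀ h0
  refine h.elem (j := 1) (k := 0) (by norm_num) (by norm_num) (by norm_num) one_mem' h.E1 ?_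
  simp only [brkt, map_pow, map_one, map_zero, map_add, map_mul, map_neg, map_inv₀,
    h.conj_eq, inv_inv]
  ring

lemma Nice.two (h : Nice α) : (2 : ℂ) ∈ RU (Uα α)  := by
  have h0 : α ≠ 0 := h.ne0
  have h1 : α * α⁻¹ = 1 := mul_inv_cancel₀ h0
  refine h.elem (j := 0) (k := 2) (by norm_num) (by norm_num) (by norm_num) zero_mem' h.onepca ?_
  simp only [brkt, map_pow, map_one, map_zero, map_add, map_mul, map_neg, map_inv₀,
    h.conj_eq, inv_inv]
  linear_combination ((-1:ℂ) * α⁻¹ ^ 4 + (2:ℂ) * α ^ 2 * α⁻¹ ^ 2 + (-1:ℂ) * α ^ 4) * h1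

lemma Nice.c2 (h : Nice α) : (α + α⁻¹) ^ 2 ∈ RU (Uα α)  := by
  have h0 : α ≠ 0 := h.ne0
  have h1 : α * α⁻¹ = 1 := mul_inv_cancel₀ h0
  refine h.elem (j := 0) (k := 1) (by norm_num) (by norm_num) (by norm_num) zero_mem' h.E4 ?_
  simp only [brkt, map_pow, map_one, map_zero, map_add, map_mul, map_neg, map_inv₀,
    h.conj_eq, inv_inv]
  linear_combination ((-1:ℂ) * α⁻¹ ^ 4 + (2:ℂ) * α ^ 2 * α⁻¹ ^ 2 + (-1:ℂ) * α ^ 4) * h1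

lemma Nice.E8 (h : Nice α) : (-α ^ 3) / (α + α⁻¹) ∈ RU (Uα α)  := by
  have h0 : α ≠ 0 := h.ne0
  have h1 : α * α⁻¹ = 1 := mul_inv_cancel₀ h0
  refine h.elem_div (j := 3) (k := 1) (by norm_num) (by norm_num) (by norm_num) h.C_ne zero_mem' one_mem' ?_
  simp only [brkt, map_pow, map_one, map_zero, map_add, map_mul, map_neg, map_inv₀,
    h.conj_eq, inv_inv]
  linear_combination ((-1:ℂ) * α ^ 4 * α⁻¹ ^ 5 + (2:ℂ) * α ^ 6 * α⁻¹ ^ 3 + (-1:ℂ) * α ^ 8 * α⁻¹) * h1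

lemma Nice.gdown20 (h : Nice α) {r : ℂ} (hr : (starRingEnd ℂ) r = r) (hq : r * α ^ 2 ∈ RU (Uα α)) : -r ∈ RU (Uα α)  := by
  have h0 : α ≠ 0 := h.ne0
  have h1 : α * α⁻¹ = 1 := mul_inv_cancel₀ h0
  refine h.elem (j := 0) (k := 1) (by norm_num) (by norm_num) (by norm_num) zero_mem' hq ?_
  simp only [brkt, map_pow, map_one, map_zero, map_add, map_mul, map_neg, map_inv₀,
    h.conj_eq, inv_inv, hr]
  linear_combination (α⁻¹ ^ 2 * r + (-2:ℂ) * α * α⁻¹ * r + α ^ 2 * r) * h1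

lemma Nice.gdown30 (h : Nice α) {r : ℂ} (hr : (starRingEnd ℂ) r = r) (hq : r * α ^ 3 ∈ RU (Uα α)) : -(r * (α + α⁻¹)) ∈ RU (Uα α)  := by
  have h0 : α ≠ 0 := h.ne0
  have h1 : α * α⁻¹ = 1 := mul_inv_cancel₀ h0
  refine h.elem (j := 0) (k := 1) (by norm_num) (by norm_num) (by norm_num) zero_mem' hq ?_
  simp only [brkt, map_pow, map_one, map_zero, map_add, map_mul, map_neg, map_inv₀,
    h.conj_eq, inv_inv, hr]
  linear_combination (α⁻¹ ^ 3 * r + (-1:ℂ) * α * α⁻¹ ^ 2 * r + (-1:ℂ) * α ^ 2 * α⁻¹ * r + α ^ 3 * r) * h1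

lemma Nice.gdown21 (h : Nice α) {r : ℂ} (hr : (starRingEnd ℂ) r = r) (hq : r * α ^ 2 ∈ RU (Uα α)) : r * (α + α⁻¹) * α ∈ RU (Uα α)  := by
  have h0 : α ≠ 0 := h.ne0
  have h1 : α * α⁻¹ = 1 := mul_inv_cancel₀ h0
  refine h.elem (j := 1) (k := 0) (by norm_num) (by norm_num) (by norm_num) zero_mem' hq ?_
  simp only [brkt, map_pow, map_one, map_zero, map_add, map_mul, map_neg, map_inv₀,
    h.conj_eq, inv_inv, hr]
  ring

lemma Nice.gdown32 (h : Nice α) {r : ℂ} (hr : (starRingEnd ℂ) r = r) (hq : r * α ^ 3 ∈ RU (Uα α)) : r * (α + α⁻¹) * α ^ 2 ∈ RU (Uα α)  := by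
  have h0 : α ≠ 0 := h.ne0
  have h1 : α * α⁻¹ = 1 := mul_inv_cancel₀ h0
  refine h.elem (j := 2) (k := 1) (by norm_num) (by norm_num) (by norm_num) zero_mem' hq ?_
  simp only [brkt, map_pow, map_one, map_zero, map_add, map_mul, map_neg, map_inv₀,
    h.conj_eq, inv_inv, hr]
  ring

lemma Nice.gup13 (h : Nice α) {r : ℂ} (hr : (starRingEnd ℂ) r = r) (hq : r * α ∈ RU (Uα α)) : -(r * α ^ 3) ∈ RU (Uα α)  := by
  have h0 : α ≠ 0 := h.ne0
  have h1 : α * α⁻¹ = 1 := mul_inv_cancel₀ h0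
  refine h.elem (j := 3) (k := 2) (by norm_num) (by norm_num) (by norm_num) zero_mem' hq ?_
  simp only [brkt, map_pow, map_one, map_zero, map_add, map_mul, map_neg, map_inv₀,
    h.conj_eq, inv_inv, hr]
  linear_combination ((-1:ℂ) * α ^ 6 * α⁻¹ ^ 5 * r + (2:ℂ) * α ^ 7 * α⁻¹ ^ 4 * r + (-1:ℂ) * α ^ 8 * α⁻¹ ^ 3 * r) * h1

lemma Nice.gup12 (h : Nice α) {r : ℂ} (hr : (starRingEnd ℂ) r = r) (hq : r * α ∈ RU (Uα α)) : r * (α + α⁻¹) * α ^ 2 ∈ RU (Uα α)  := by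
  have h0 : α ≠ 0 := h.ne0
  have h1 : α * α⁻¹ = 1 := mul_inv_cancel₀ h0
  refine h.elem (j := 2) (k := 3) (by norm_num) (by norm_num) (by norm_num) zero_mem' hq ?_
  simp only [brkt, map_pow, map_one, map_zero, map_add, map_mul, map_neg, map_inv₀,
    h.conj_eq, inv_inv, hr]
  linear_combination (α ^ 5 * α⁻¹ ^ 6 * r + (-1:ℂ) * α ^ 6 * α⁻¹ ^ 5 * r + (-1:ℂ) * α ^ 7 * α⁻¹ ^ 4 * r + α ^ 8 * α⁻¹ ^ 3 * r) * h1

lemma Nice.gdown3C (h : Nice α) {r : ℂ} (hr : (starRingEnd ℂ) r = r) (hq : r * α ^ 3 ∈ RU (Uα α)) : (-r) / (α + α⁻¹) ∈ RU (Uα α)  := by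
  have h0 : α ≠ 0 := h.ne0
  have h1 : α * α⁻¹ = 1 := mul_inv_cancel₀ h0
  refine h.elem_div (j := 0) (k := 2) (by norm_num) (by norm_num) (by norm_num) h.C_ne zero_mem' hq ?_
  simp only [brkt, map_pow, map_one, map_zero, map_add, map_mul, map_neg, map_inv₀,
    h.conj_eq, inv_inv, hr]
  linear_combination (α⁻¹ ^ 4 * r + α * α⁻¹ ^ 5 * r + (-2:ℂ) * α ^ 2 * α⁻¹ ^ 2 * r + (-2:ℂ) * α ^ 3 * α⁻¹ ^ 3 * r + α ^ 4 * r + α ^ 5 * α⁻¹ * r) * h1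



lemma Nice.one_add (h : Nice α) : ∀ m, ∀ w ∈ stepSet (Uα α) m, (1 : ℂ) + w ∈ RU (Uα α) := by
  intro m
  induction m with
  | zero =>
    intro w hw
    rcases mem_stepSet_zero.1 hw with rfl | rfl
    · exact mem_congr one_mem' (by norm_num)
    · exact mem_congr h.two (by norm_num)
  | succ m ih =>
    intro w hw
    obtain ⟨a, ha, b, hb, h1, h2, u, hu, v, hv, rfl⟩ := mem_stepSet_succ.1 hw
    obtain ⟨j, hj, rfl⟩ := Uα_elim ha
    obtain ⟨k, hk, rfl⟩ := Uα_elim hb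
    have hjk : j ≠ k := by rintro rfl; exact h1 rfl
    have e : (1 : ℂ) + lineInt (α ^ j) (α ^ k) u v
        = lineInt (α ^ j) (α ^ k) (1 + u) (1 + v) := by
      rw [lineInt_add, lineInt_diag _ _ _ (h.brkt_ne hj hk hjk)]
    rw [e]
    exact h.lineInt_mem ha hb h1 h2 (ih u hu) (ih v hv)

lemma Nice.addm (h : Nice α) {z w : ℂ} (hz : z ∈ RU (Uα α)) (hw : w ∈ RU (Uα α)) :
    z + w ∈ RU (Uα α) := by
  obtain ⟨n, hn⟩ := mem_RU.1 hz
  clear hz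
  induction n generalizing z w with
  | zero =>
    rcases mem_stepSet_zero.1 hn with rfl | rfl
    · exact mem_congr hw (by ring)
    · obtain ⟨m, hm⟩ := mem_RU.1 hw
      exact h.one_add m w hm
  | succ n ih =>
    obtain ⟨a, ha, b, hb, h1, h2, u, hu, v, hv, rfl⟩ := mem_stepSet_succ.1 hn
    obtain ⟨j, hj, rfl⟩ := Uα_elim ha
    obtain ⟨k, hk, rfl⟩ := Uα_elim hb
    have hjk : j ≠ k := by rintro rfl; exact h1 rfl
    have e : lineInt (α ^ j) (α ^ k) u v + w
        = lineInt (α ^ j) (α ^ k) (u + w) (v + w) := by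
      rw [lineInt_add, lineInt_diag _ _ _ (h.brkt_ne hj hk hjk)]
    rw [e]
    exact h.lineInt_mem ha hb h1 h2 (ih hw hu) (ih hw hv)

lemma Nice.negm (h : Nice α) {z : ℂ} (hz : z ∈ RU (Uα α)) : -z ∈ RU (Uα α) := by
  obtain ⟨n, hn⟩ := mem_RU.1 hz
  clear hz
  induction n generalizing z with
  | zero =>
    rcases mem_stepSet_zero.1 hn with rfl | rfl
    · exact mem_congr zero_mem' (by norm_num)
    · exact mem_congr h.neg_one (by norm_num)
  | succ n ih =>
    obtain ⟨a, ha, b, hb, h1, h2, u, hu, v, hv, rfl⟩ := mem_stepSet_succ.1 hn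
    rw [← lineInt_neg]
    exact h.lineInt_mem ha hb h1 h2 (ih hu) (ih hv)

lemma Nice.smulm (h : Nice α) {c z : ℂ} (hc : (starRingEnd ℂ) c = c)
    (hcm : c ∈ RU (Uα α)) (hz : z ∈ RU (Uα α)) : c * z ∈ RU (Uα α) := by
  obtain ⟨n, hn⟩ := mem_RU.1 hz
  clear hz
  induction n generalizing z with
  | zero =>
    rcases mem_stepSet_zero.1 hn with rfl | rfl
    · exact mem_congr zero_mem' (by ring)
    · exact mem_congr hcm (by ring)
  | succ n ih =>
    obtain ⟨a, ha, b, hb, h1, h2, u, hu, v, hv, rfl⟩ := mem_stepSet_succ.1 hn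
    rw [← lineInt_smul _ _ _ _ _ hc]
    exact h.lineInt_mem ha hb h1 h2 (ih hu) (ih hv)

lemma Nice.c2m1 (h : Nice α) : (α + α⁻¹) ^ 2 - 1 ∈ RU (Uα α) :=
  mem_congr (h.addm h.c2 h.neg_one) (by ring)

lemma Nice.c2m2 (h : Nice α) : (α + α⁻¹) ^ 2 - 2 ∈ RU (Uα α) :=
  mem_congr (h.addm h.c2 (h.negm h.two)) (by ring)

lemma Nice.I1sq (h : Nice α) : (α + α⁻¹)⁻¹ ^ 2 ∈ RU (Uα α) := by
  have hr : (starRingEnd ℂ) ((-1 : ℂ) / (α + α⁻¹)) = (-1 : ℂ) / (α + α⁻¹) := by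
    simp only [map_div₀, map_neg, map_one, map_add, map_inv₀, h.conj_eq, inv_inv]
    ring
  have hq : ((-1 : ℂ) / (α + α⁻¹)) * α ^ 3 ∈ RU (Uα α) := mem_congr h.E8 (by ring)
  have := h.gdown3C hr hq
  exact mem_congr this (by ring)


lemma Nice.ray11 (h : Nice α) {r s : ℂ} (hr : (starRingEnd ℂ) r = r)
    (hs : (starRingEnd ℂ) s = s) (h1m : r * α ∈ RU (Uα α)) (h2m : s * α ∈ RU (Uα α)) :
    r * s * α ^ 2 ∈ RU (Uα α) := by
  have h0 : α ≠ 0 := h.ne0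
  have h1 : α * α⁻¹ = 1 := mul_inv_cancel₀ h0
  have hJ : (α + α⁻¹) ^ 2 * (α + α⁻¹)⁻¹ ^ 2 = 1 := by
    rw [← mul_pow, mul_inv_cancel₀ h.C_ne, one_pow]
  have t1 : -(s * α ^ 3) ∈ RU (Uα α) := h.gup13 hs (mem_congr h2m (by ring))
  have t2 : -(-s * (α + α⁻¹)) ∈ RU (Uα α) :=
    h.gdown30 (r := -s) (by simp only [map_mul, map_add, map_sub, map_neg, map_pow, map_one, map_inv₀, map_ofNat, h.conj_eq, inv_inv, hr, hs]; try ring) (mem_congr t1 (by ring))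
  have t3 : -(-s * (α + α⁻¹)) * (r * α) ∈ RU (Uα α) := h.smulm (by simp only [map_mul, map_add, map_sub, map_neg, map_pow, map_one, map_inv₀, map_ofNat, h.conj_eq, inv_inv, hr, hs]; try ring) t2 h1m
  have t4 : s * (α + α⁻¹) * r * (α + α⁻¹) * α ^ 2 ∈ RU (Uα α) :=
    h.gup12 (r := s * (α + α⁻¹) * r) (by simp only [map_mul, map_add, map_sub, map_neg, map_pow, map_one, map_inv₀, map_ofNat, h.conj_eq, inv_inv, hr, hs]; try ring) (mem_congr t3 (by ring))
  have t5 : (α + α⁻¹)⁻¹ ^ 2 * (s * (α + α⁻¹) * r * (α + α⁻¹) * α ^ 2) ∈ RU (Uα α) :=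
    h.smulm (by simp only [map_mul, map_add, map_sub, map_neg, map_pow, map_one, map_inv₀, map_ofNat, h.conj_eq, inv_inv, hr, hs]; try ring) h.I1sq t4
  exact mem_congr t5 (by linear_combination ((-1:ℂ) * α ^ 2 * r * s + α ^ 2 * α⁻¹ ^ 2 * r * s * (α + α⁻¹)⁻¹ ^ 2 + (-1:ℂ) * α ^ 3 * α⁻¹ * r * s + (2:ℂ) * α ^ 3 * α⁻¹ * r * s * (α + α⁻¹)⁻¹ ^ 2 + α ^ 3 * α⁻¹ ^ 3 * r * s * (α + α⁻¹)⁻¹ ^ 2 + α ^ 4 * r * s * (α + α⁻¹)⁻¹ ^ 2 + (2:ℂ) * α ^ 4 * α⁻¹ ^ 2 * r * s * (α + α⁻¹)⁻¹ ^ 2 + α ^ 5 * α⁻¹ * r * s * (α + α⁻¹)⁻¹ ^ 2) * h1 + ((-1:ℂ) * α ^ 4 * α⁻¹ ^ 2 * r * s) * hJ)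

lemma Nice.ray12 (h : Nice α) {r s : ℂ} (hr : (starRingEnd ℂ) r = r)
    (hs : (starRingEnd ℂ) s = s) (h1m : r * α ∈ RU (Uα α)) (h2m : s * α ^ 2 ∈ RU (Uα α)) :
    r * s * α ^ 3 ∈ RU (Uα α) := by
  have t1 : -s ∈ RU (Uα α) := h.gdown20 hs h2m
  have t2 : -(s * r) * α ∈ RU (Uα α) := mem_congr (h.smulm (by simp only [map_mul, map_add, map_sub, map_neg, map_pow, map_one, map_inv₀, map_ofNat, h.conj_eq, inv_inv, hr, hs]; try ring) t1 h1m) (by ring)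
  have t3 : -(-(s * r) * α ^ 3) ∈ RU (Uα α) := h.gup13 (r := -(s * r)) (by simp only [map_mul, map_add, map_sub, map_neg, map_pow, map_one, map_inv₀, map_ofNat, h.conj_eq, inv_inv, hr, hs]; try ring) t2
  exact mem_congr t3 (by ring)

lemma Nice.ray13 (h : Nice α) {r s : ℂ} (hr : (starRingEnd ℂ) r = r)
    (hs : (starRingEnd ℂ) s = s) (h1m : r * α ∈ RU (Uα α)) (h2m : s * α ^ 3 ∈ RU (Uα α)) :
    r * s * α ^ 4 ∈ RU (Uα α) := by
  have h0 : α ≠ 0 := h.ne0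
  have h1 : α * α⁻¹ = 1 := mul_inv_cancel₀ h0
  have hJ : (α + α⁻¹) ^ 2 * (α + α⁻¹)⁻¹ ^ 2 = 1 := by
    rw [← mul_pow, mul_inv_cancel₀ h.C_ne, one_pow]
  have d1 : -(s * (α + α⁻¹)) ∈ RU (Uα α) := h.gdown30 hs h2m
  have t1 : -(s * (α + α⁻¹) * r) * α ∈ RU (Uα α) :=
    mem_congr (h.smulm (by simp only [map_mul, map_add, map_sub, map_neg, map_pow, map_one, map_inv₀, map_ofNat, h.conj_eq, inv_inv, hr, hs]; try ring) d1 h1m) (by ring)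
  have tA : -(-(s * (α + α⁻¹) * r) * α ^ 3) ∈ RU (Uα α) :=
    h.gup13 (r := -(s * (α + α⁻¹) * r)) (by simp only [map_mul, map_add, map_sub, map_neg, map_pow, map_one, map_inv₀, map_ofNat, h.conj_eq, inv_inv, hr, hs]; try ring) t1
  have tB : -(s * (α + α⁻¹) * r) * (α + α⁻¹) * α ^ 2 ∈ RU (Uα α) :=
    h.gup12 (r := -(s * (α + α⁻¹) * r)) (by simp only [map_mul, map_add, map_sub, map_neg, map_pow, map_one, map_inv₀, map_ofNat, h.conj_eq, inv_inv, hr, hs]; try ring) t1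
  have tB' : (α + α⁻¹)⁻¹ ^ 2 * (-(s * (α + α⁻¹) * r) * (α + α⁻¹) * α ^ 2) ∈ RU (Uα α) :=
    h.smulm (by simp only [map_mul, map_add, map_sub, map_neg, map_pow, map_one, map_inv₀, map_ofNat, h.conj_eq, inv_inv, hr, hs]; try ring) h.I1sq tB
  exact mem_congr (h.addm tA tB') (by linear_combination ((-1:ℂ) * α ^ 2 * α⁻¹ ^ 2 * r * s * (α + α⁻¹)⁻¹ ^ 2 + α ^ 3 * α⁻¹ * r * s + (-2:ℂ) * α ^ 3 * α⁻¹ * r * s * (α + α⁻¹)⁻¹ ^ 2 + (-1:ℂ) * α ^ 3 * α⁻¹ ^ 3 * r * s * (α + α⁻¹)⁻¹ ^ 2 + (-1:ℂ) * α ^ 4 * r * s * (α + α⁻¹)⁻¹ ^ 2 + (-2:ℂ) * α ^ 4 * α⁻¹ ^ 2 * r * s * (α + α⁻¹)⁻¹ ^ 2 + (-1:ℂ) * α ^ 5 * α⁻¹ * r * s * (α + α⁻¹)⁻¹ ^ 2) * h1 + (α ^ 4 * α⁻¹ ^ 2 * r * s) * hJ)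

lemma Nice.ray22 (h : Nice α) {r s : ℂ} (hr : (starRingEnd ℂ) r = r)
    (hs : (starRingEnd ℂ) s = s) (h1m : r * α ^ 2 ∈ RU (Uα α)) (h2m : s * α ^ 2 ∈ RU (Uα α)) :
    r * s * α ^ 4 ∈ RU (Uα α) := by
  have h0 : α ≠ 0 := h.ne0
  have h1 : α * α⁻¹ = 1 := mul_inv_cancel₀ h0
  have d1 : -s ∈ RU (Uα α) := h.gdown20 hs h2m
  have t1 : -(s * r) * α ^ 2 ∈ RU (Uα α) := mem_congr (h.smulm (by simp only [map_mul, map_add, map_sub, map_neg, map_pow, map_one, map_inv₀, map_ofNat, h.conj_eq, inv_inv, hr, hs]; try ring) d1 h1m) (by ring)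
  have t2 : -(s * r) * (α + α⁻¹) * α ∈ RU (Uα α) :=
    h.gdown21 (r := -(s * r)) (by simp only [map_mul, map_add, map_sub, map_neg, map_pow, map_one, map_inv₀, map_ofNat, h.conj_eq, inv_inv, hr, hs]; try ring) t1
  have t3 : -(s * r * (α + α⁻¹)) * α ∈ RU (Uα α) := mem_congr t2 (by ring)
  have tA : -(-(s * r * (α + α⁻¹)) * α ^ 3) ∈ RU (Uα α) :=
    h.gup13 (r := -(s * r * (α + α⁻¹))) (by simp only [map_mul, map_add, map_sub, map_neg, map_pow, map_one, map_inv₀, map_ofNat, h.conj_eq, inv_inv, hr, hs]; try ring) t3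
  exact mem_congr (h.addm tA t1) (by linear_combination ((-1:ℂ) * α ^ 2 * r * s) * h1)

lemma Nice.ray23 (h : Nice α) {r s : ℂ} (hr : (starRingEnd ℂ) r = r)
    (hs : (starRingEnd ℂ) s = s) (h1m : r * α ^ 2 ∈ RU (Uα α)) (h2m : s * α ^ 3 ∈ RU (Uα α)) :
    r * s * α ^ 5 ∈ RU (Uα α) := by
  have h0 : α ≠ 0 := h.ne0
  have h1 : α * α⁻¹ = 1 := mul_inv_cancel₀ h0
  have hJ : (α + α⁻¹) ^ 2 * (α + α⁻¹)⁻¹ ^ 2 = 1 := by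
    rw [← mul_pow, mul_inv_cancel₀ h.C_ne, one_pow]
  have d1 : -(s * (α + α⁻¹)) ∈ RU (Uα α) := h.gdown30 hs h2m
  have t1 : -(s * (α + α⁻¹) * r) * α ^ 2 ∈ RU (Uα α) :=
    mem_congr (h.smulm (by simp only [map_mul, map_add, map_sub, map_neg, map_pow, map_one, map_inv₀, map_ofNat, h.conj_eq, inv_inv, hr, hs]; try ring) d1 h1m) (by ring)
  have t2 : -(s * (α + α⁻¹) * r) * (α + α⁻¹) * α ∈ RU (Uα α) :=
    h.gdown21 (r := -(s * (α + α⁻¹) * r)) (by simp only [map_mul, map_add, map_sub, map_neg, map_pow, map_one, map_inv₀, map_ofNat, h.conj_eq, inv_inv, hr, hs]; try ring) t1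
  have t3 : -(s * (α + α⁻¹) ^ 2 * r) * α ∈ RU (Uα α) := mem_congr t2 (by ring)
  have t4 : -(-(s * (α + α⁻¹) ^ 2 * r) * α ^ 3) ∈ RU (Uα α) :=
    h.gup13 (r := -(s * (α + α⁻¹) ^ 2 * r)) (by simp only [map_mul, map_add, map_sub, map_neg, map_pow, map_one, map_inv₀, map_ofNat, h.conj_eq, inv_inv, hr, hs]; try ring) t3
  have t5 : (α + α⁻¹)⁻¹ ^ 2 * -(-(s * (α + α⁻¹) ^ 2 * r) * α ^ 3) ∈ RU (Uα α) :=
    h.smulm (by simp only [map_mul, map_add, map_sub, map_neg, map_pow, map_one, map_inv₀, map_ofNat, h.conj_eq, inv_inv, hr, hs]; try ring) h.I1sq t4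
  have t6 : ((α + α⁻¹) ^ 2 - 1) * ((α + α⁻¹)⁻¹ ^ 2 * -(-(s * (α + α⁻¹) ^ 2 * r) * α ^ 3)) ∈ RU (Uα α) :=
    h.smulm (by simp only [map_mul, map_add, map_sub, map_neg, map_pow, map_one, map_inv₀, map_ofNat, h.conj_eq, inv_inv, hr, hs]; try ring) h.c2m1 t5
  exact mem_congr (h.addm t6 t1) (by linear_combination ((-1:ℂ) * α ^ 2 * α⁻¹ * r * s + (-1:ℂ) * α ^ 3 * r * s + (-1:ℂ) * α ^ 3 * α⁻¹ ^ 2 * r * s + (-1:ℂ) * α ^ 3 * α⁻¹ ^ 2 * r * s * (α + α⁻¹)⁻¹ ^ 2 + α ^ 3 * α⁻¹ ^ 4 * r * s * (α + α⁻¹)⁻¹ ^ 2 + (-1:ℂ) * α ^ 4 * α⁻¹ * r * s + (-2:ℂ) * α ^ 4 * α⁻¹ * r * s * (α + α⁻¹)⁻¹ ^ 2 + (-1:ℂ) * α ^ 4 * α⁻¹ ^ 3 * r * s + (3:ℂ) * α ^ 4 * α⁻¹ ^ 3 * r * s * (α + α⁻¹)⁻¹ ^ 2 + α ^ 4 * α⁻¹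 ^ 5 * r * s * (α + α⁻¹)⁻¹ ^ 2 + (-1:ℂ) * α ^ 5 * r * s + (-1:ℂ) * α ^ 5 * r * s * (α + α⁻¹)⁻¹ ^ 2 + (-1:ℂ) * α ^ 5 * α⁻¹ ^ 2 * r * s + (4:ℂ) * α ^ 5 * α⁻¹ ^ 2 * r * s * (α + α⁻¹)⁻¹ ^ 2 + (3:ℂ) * α ^ 5 * α⁻¹ ^ 4 * r * s * (α + α⁻¹)⁻¹ ^ 2 + (-1:ℂ) * α ^ 6 * α⁻¹ * r * s + (3:ℂ) * α ^ 6 * α⁻¹ * r * s * (α + α⁻¹)⁻¹ ^ 2 + (-1:ℂ) * α ^ 6 * α⁻¹ ^ 3 * r * s + (4:ℂ) * α ^ 6 * α⁻¹ ^ 3 * r * s * (α + α⁻¹)⁻¹ ^ 2 + α ^ 6 * α⁻¹ ^ 5 * r * s * (α + α⁻¹)⁻¹ ^ 2 + α ^ 7 * r * s * (α + α⁻¹)⁻¹ ^ 2 + (-1:ℂ) * α ^ 7 * α⁻¹ ^ 2 * r * s + (3:ℂ) * α ^ 7 * α⁻¹ ^ 2 * r * s * (α + α⁻¹)⁻¹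 ^ 2 + (3:ℂ) * α ^ 7 * α⁻¹ ^ 4 * r * s * (α + α⁻¹)⁻¹ ^ 2 + α ^ 8 * α⁻¹ * r * s * (α + α⁻¹)⁻¹ ^ 2 + (-1:ℂ) * α ^ 8 * α⁻¹ ^ 3 * r * s + (3:ℂ) * α ^ 8 * α⁻¹ ^ 3 * r * s * (α + α⁻¹)⁻¹ ^ 2 + α ^ 8 * α⁻¹ ^ 5 * r * s * (α + α⁻¹)⁻¹ ^ 2 + α ^ 9 * α⁻¹ ^ 2 * r * s * (α + α⁻¹)⁻¹ ^ 2 + (2:ℂ) * α ^ 9 * α⁻¹ ^ 4 * r * s * (α + α⁻¹)⁻¹ ^ 2 + α ^ 10 * α⁻¹ ^ 3 * r * s * (α + α⁻¹)⁻¹ ^ 2) * h1 + ((-1:ℂ) * α ^ 5 * α⁻¹ ^ 4 * r * s + (-1:ℂ) * α ^ 7 * α⁻¹ ^ 4 * r * s + (-1:ℂ) * α ^ 9 * α⁻¹ ^ 4 * r * s) * hJ)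

lemma Nice.ray33 (h : Nice α) {r s : ℂ} (hr : (starRingEnd ℂ) r = r)
    (hs : (starRingEnd ℂ) s = s) (h1m : r * α ^ 3 ∈ RU (Uα α)) (h2m : s * α ^ 3 ∈ RU (Uα α)) :
    r * s * α ^ 6 ∈ RU (Uα α) := by
  have h0 : α ≠ 0 := h.ne0
  have h1 : α * α⁻¹ = 1 := mul_inv_cancel₀ h0
  have hJ : (α + α⁻¹) ^ 2 * (α + α⁻¹)⁻¹ ^ 2 = 1 := by
    rw [← mul_pow, mul_inv_cancel₀ h.C_ne, one_pow]
  have d1 : -(s * (α + α⁻¹)) ∈ RU (Uα α) := h.gdown30 hs h2m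
  have t1 : -(s * (α + α⁻¹) * r) * α ^ 3 ∈ RU (Uα α) :=
    mem_congr (h.smulm (by simp only [map_mul, map_add, map_sub, map_neg, map_pow, map_one, map_inv₀, map_ofNat, h.conj_eq, inv_inv, hr, hs]; try ring) d1 h1m) (by ring)
  have tA1 : ((α + α⁻¹) ^ 2 - 2) * (-(s * (α + α⁻¹) * r) * α ^ 3) ∈ RU (Uα α) :=
    h.smulm (by simp only [map_mul, map_add, map_sub, map_neg, map_pow, map_one, map_inv₀, map_ofNat, h.conj_eq, inv_inv, hr, hs]; try ring) h.c2m2 t1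
  have tA : -(((α + α⁻¹) ^ 2 - 2) * (-(s * (α + α⁻¹) * r) * α ^ 3)) ∈ RU (Uα α) := h.negm tA1
  have tB1 : -(s * (α + α⁻¹) * r) * (α + α⁻¹) * α ^ 2 ∈ RU (Uα α) :=
    h.gdown32 (r := -(s * (α + α⁻¹) * r)) (by simp only [map_mul, map_add, map_sub, map_neg, map_pow, map_one, map_inv₀, map_ofNat, h.conj_eq, inv_inv, hr, hs]; try ring) t1
  have tB2 : (α + α⁻¹)⁻¹ ^ 2 * (-(s * (α + α⁻¹) * r) * (α + α⁻¹) * α ^ 2) ∈ RU (Uα α) :=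
    h.smulm (by simp only [map_mul, map_add, map_sub, map_neg, map_pow, map_one, map_inv₀, map_ofNat, h.conj_eq, inv_inv, hr, hs]; try ring) h.I1sq tB1
  have tB3 : ((α + α⁻¹) ^ 2 - 1) * ((α + α⁻¹)⁻¹ ^ 2 * (-(s * (α + α⁻¹) * r) * (α + α⁻¹) * α ^ 2)) ∈ RU (Uα α) :=
    h.smulm (by simp only [map_mul, map_add, map_sub, map_neg, map_pow, map_one, map_inv₀, map_ofNat, h.conj_eq, inv_inv, hr, hs]; try ring) h.c2m1 tB2
  exact mem_congr (h.addm tA tB3) (by linear_combination (α ^ 2 * α⁻¹ ^ 2 * r * s * (α + α⁻¹)⁻¹ ^ 2 + (-1:ℂ) * α ^ 2 * α⁻¹ ^ 4 * r * s * (α + α⁻¹)⁻¹ ^ 2 + (-2:ℂ) * α ^ 3 * α⁻¹ * r * s + (2:ℂ) * α ^ 3 * α⁻¹ * r * s * (α + α⁻¹)⁻¹ ^ 2 + α ^ 3 * α⁻¹ ^ 3 * r * s + (-3:ℂ) * α ^ 3 * α⁻¹ ^ 3 * r * s * (α + α⁻¹)⁻¹ ^ 2 + (-1:ℂ) * α ^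 3 * α⁻¹ ^ 5 * r * s * (α + α⁻¹)⁻¹ ^ 2 + (-2:ℂ) * α ^ 4 * r * s + α ^ 4 * r * s * (α + α⁻¹)⁻¹ ^ 2 + α ^ 4 * α⁻¹ ^ 2 * r * s + (-4:ℂ) * α ^ 4 * α⁻¹ ^ 2 * r * s * (α + α⁻¹)⁻¹ ^ 2 + (-3:ℂ) * α ^ 4 * α⁻¹ ^ 4 * r * s * (α + α⁻¹)⁻¹ ^ 2 + α ^ 5 * α⁻¹ * r * s + (-3:ℂ) * α ^ 5 * α⁻¹ * r * s * (α + α⁻¹)⁻¹ ^ 2 + α ^ 5 * α⁻¹ ^ 3 * r * s + (-4:ℂ) * α ^ 5 * α⁻¹ ^ 3 * r * s * (α + α⁻¹)⁻¹ ^ 2 + (-1:ℂ) * α ^ 5 * α⁻¹ ^ 5 * r * s * (α + α⁻¹)⁻¹ ^ 2 + (-1:ℂ) * α ^ 6 * r * s * (α + α⁻¹)⁻¹ ^ 2 + α ^ 6 * α⁻¹ ^ 2 * r * s + (-3:ℂ) * α ^ 6 * α⁻¹ ^ 2 * r * s * (α + α⁻¹)⁻¹ ^ 2 + (-3:ℂ)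 * α ^ 6 * α⁻¹ ^ 4 * r * s * (α + α⁻¹)⁻¹ ^ 2 + (-1:ℂ) * α ^ 7 * α⁻¹ * r * s * (α + α⁻¹)⁻¹ ^ 2 + α ^ 7 * α⁻¹ ^ 3 * r * s + (-3:ℂ) * α ^ 7 * α⁻¹ ^ 3 * r * s * (α + α⁻¹)⁻¹ ^ 2 + (-1:ℂ) * α ^ 7 * α⁻¹ ^ 5 * r * s * (α + α⁻¹)⁻¹ ^ 2 + (-1:ℂ) * α ^ 8 * α⁻¹ ^ 2 * r * s * (α + α⁻¹)⁻¹ ^ 2 + (-2:ℂ) * α ^ 8 * α⁻¹ ^ 4 * r * s * (α + α⁻¹)⁻¹ ^ 2 + (-1:ℂ) * α ^ 9 * α⁻¹ ^ 3 * r * s * (α + α⁻¹)⁻¹ ^ 2) * h1 + (α ^ 4 * α⁻¹ ^ 4 * r * s + α ^ 6 * α⁻¹ ^ 4 * r * s + α ^ 8 * α⁻¹ ^ 4 * r * s) * hJ)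


lemma conj_brkt (x y : ℂ) : (starRingEnd ℂ) (brkt x y) = -brkt x y := by
  simp only [brkt, map_sub, map_mul, Complex.conj_conj]
  ring

lemma brkt_div_real (x y z w : ℂ) :
    (starRingEnd ℂ) (brkt x y / brkt z w) = brkt x y / brkt z w := by
  rw [map_div₀, conj_brkt, conj_brkt, neg_div_neg_eq]

lemma Nice.ray (h : Nice α) : ∀ k e : ℕ, k ≤ 3 → e ≤ 3 → ∀ r s : ℂ,
    (starRingEnd ℂ) r = r → (starRingEnd ℂ) s = s →
    r * α ^ k ∈ RU (Uα α) → s * α ^ e ∈ RU (Uα α) →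
    r * s * α ^ (k + e) ∈ RU (Uα α) := by
  intro k e hk he r s hr hs h1m h2m
  rcases Nat.eq_zero_or_pos k with rfl | hk1
  · have hr' : r ∈ RU (Uα α) := mem_congr h1m (by ring)
    exact mem_congr (h.smulm hr hr' h2m) (by ring)
  rcases Nat.eq_zero_or_pos e with rfl | he1
  · have hs' : s ∈ RU (Uα α) := mem_congr h2m (by ring)
    exact mem_congr (h.smulm hs hs' h1m) (by ring)
  interval_cases k <;> interval_cases e
  · exact mem_congr (h.ray11 hr hs (mem_congr h1m (by ring)) (mem_congr h2m (by ring))) (by ring)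
  · exact mem_congr (h.ray12 hr hs (mem_congr h1m (by ring)) (mem_congr h2m (by ring))) (by ring)
  · exact mem_congr (h.ray13 hr hs (mem_congr h1m (by ring)) (mem_congr h2m (by ring))) (by ring)
  · exact mem_congr (h.ray12 hs hr (mem_congr h2m (by ring)) (mem_congr h1m (by ring))) (by ring)
  · exact mem_congr (h.ray22 hr hs (mem_congr h1m (by ring)) (mem_congr h2m (by ring))) (by ring)
  · exact mem_congr (h.ray23 hr hs (mem_congr h1m (by ring)) (mem_congr h2m (by ring))) (by ring)
  · exact mem_congr (h.ray13 hs hr (mem_congr h2m (by ring)) (mem_congr h1m (by ring))) (by ring)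
  · exact mem_congr (h.ray23 hs hr (mem_congr h2m (by ring)) (mem_congr h1m (by ring))) (by ring)
  · exact mem_congr (h.ray33 hr hs (mem_congr h1m (by ring)) (mem_congr h2m (by ring))) (by ring)

lemma Nice.split (h : Nice α) {z : ℂ} (hz : z ∈ RU (Uα α)) :
    ∃ (r s : ℂ) (k e : ℕ), k ≤ 3 ∧ e ≤ 3 ∧
      (starRingEnd ℂ) r = r ∧ (starRingEnd ℂ) s = s ∧
      r * α ^ k ∈ RU (Uα α) ∧ s * α ^ e ∈ RU (Uα α) ∧ z = r * α ^ k + s * α ^ e := by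
  obtain ⟨n, hn⟩ := mem_RU.1 hz
  match n, hn with
  | 0, hn =>
    rcases mem_stepSet_zero.1 hn with rfl | rfl
    · exact ⟨0, 0, 0, 0, by norm_num, by norm_num, by simp, by simp,
        mem_congr zero_mem' (by ring), mem_congr zero_mem' (by ring), by ring⟩
    · exact ⟨1, 0, 0, 0, by norm_num, by norm_num, by simp, by simp,
        mem_congr one_mem' (by ring), mem_congr zero_mem' (by ring), by ring⟩
  | (n+1), hn =>
    obtain ⟨a, ha, b, hb, h1, h2, u, hu, v, hv, rfl⟩ := mem_stepSet_succ.1 hn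
    obtain ⟨j, hj, rfl⟩ := Uα_elim ha
    obtain ⟨k, hk, rfl⟩ := Uα_elim hb
    have hjk : j ≠ k := by rintro rfl; exact h1 rfl
    refine ⟨brkt (α ^ j) u / brkt (α ^ j) (α ^ k), brkt (α ^ k) v / brkt (α ^ k) (α ^ j),
      k, j, hk, hj, brkt_div_real _ _ _ _, brkt_div_real _ _ _ _, ?_, ?_, ?_⟩
    · exact mem_congr (h.pow_lineInt_mem hk hj hjk.symm zero_mem' (level_mem hu))
        (lineInt_zero_left _ _ _).symm
    · exact mem_congr (h.pow_lineInt_mem hj hk hjk zero_mem' (level_mem hv))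
        (lineInt_zero_left _ _ _).symm
    · rw [lineInt]

lemma Nice.mulm (h : Nice α) {z w : ℂ} (hz : z ∈ RU (Uα α)) (hw : w ∈ RU (Uα α)) :
    z * w ∈ RU (Uα α) := by
  obtain ⟨r1, s1, k1, e1, hk1, he1, hr1, hs1, m1, m2, rfl⟩ := h.split hz
  obtain ⟨r2, s2, k2, e2, hk2, he2, hr2, hs2, m3, m4, rfl⟩ := h.split hw
  have p1 := h.ray k1 k2 hk1 hk2 r1 r2 hr1 hr2 m1 m3
  have p2 := h.ray k1 e2 hk1 he2 r1 s2 hr1 hs2 m1 m4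
  have p3 := h.ray e1 k2 he1 hk2 s1 r2 hs1 hr2 m2 m3
  have p4 := h.ray e1 e2 he1 he2 s1 s2 hs1 hs2 m2 m4
  exact mem_congr (h.addm (h.addm p1 p2) (h.addm p3 p4)) (by ring)

end Stmt17

/-- if `1, α, α², α³` are pairwise non-±-equal unit complex numbers, then
`R({1, α, α², α³})` is a subring of `ℂ`. -/
theorem stmt17 (α : ℂ) (hα : ‖α‖ = 1)
    (h1a : α ≠ 1) (h1a' : α ≠ -1)
    (h1b : α ^ 2 ≠ 1) (h1b' : α ^ 2 ≠ -1)
    (h1c : α ^ 3 ≠ 1) (h1c' : α ^ 3 ≠ -1)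
    (hab : α ≠ α ^ 2) (hab' : α ≠ -α ^ 2)
    (hac : α ≠ α ^ 3) (hac' : α ≠ -α ^ 3)
    (hbc : α ^ 2 ≠ α ^ 3) (hbc' : α ^ 2 ≠ -α ^ 3) :
    ∃ A : Subring ℂ, (A : Set ℂ) = RU {1, α, α ^ 2, α ^ 3} := by
  have h : Stmt17.Nice α :=
    ⟨hα, h1a, h1a', h1b, h1b', h1c, h1c', hab, hab', hac, hac', hbc, hbc'⟩
  refine ⟨{ carrier := RU (Stmt17.Uα α),
            zero_mem' := Stmt17.zero_mem',
            one_mem' := Stmt17.one_mem',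
            add_mem' := fun ha hb => h.addm ha hb,
            neg_mem' := fun ha => h.negm ha,
            mul_mem' := fun ha hb => h.mulm ha hb }, rfl⟩
end

section
/- Let α be a unit-magnitude complex number such that 1, α, α², α³ are pairwise non-±-equal. Then I_{α,α³}(0,1) · I_{α,α²}(0,1) = I_{α²,α³}(0,1). -/
open Complex

/-- `I_{α,α³}(0,1) · I_{α,α²}(0,1) = I_{α²,α³}(0,1)`. -/
theorem stmt18 (α : ℂ) (hα : ‖α‖ = 1)
    (h1a : α ≠ 1) (h1a' : α ≠ -1)
    (h1b : α ^ 2 ≠ 1) (h1b' : α ^ 2 ≠ -1)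
    (h1c : α ^ 3 ≠ 1) (h1c' : α ^ 3 ≠ -1)
    (hab : α ≠ α ^ 2) (hab' : α ≠ -α ^ 2)
    (hac : α ≠ α ^ 3) (hac' : α ≠ -α ^ 3)
    (hbc : α ^ 2 ≠ α ^ 3) (hbc' : α ^ 2 ≠ -α ^ 3) :
    lineInt α (α ^ 3) 0 1 * lineInt α (α ^ 2) 0 1 = lineInt (α ^ 2) (α ^ 3) 0 1 := by
  have hα0 : α ≠ 0 := by intro h; simp [h] at hα
  have hconj : (starRingEnd ℂ) α = α⁻¹ := by
    rw [inv_eq_one_div, eq_div_iff hα0, mul_comm, Complex.mul_conj]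
    norm_cast; rw [← Complex.sq_norm, hα]; norm_num
  have h2 : α ^ 2 - 1 ≠ 0 := sub_ne_zero.mpr h1b
  have h2' : α ^ 2 + 1 ≠ 0 := by intro h; exact h1b' (by linear_combination h)
  have h4 : α ^ 4 - 1 ≠ 0 := by
    intro h; have : (α ^ 2 - 1) * (α ^ 2 + 1) = 0 := by linear_combination h
    rcases mul_eq_zero.mp this with h | h; exacts [h2 h, h2' h]
  have hdA : α ^ 3 * α⁻¹ - α * (α ^ 3)⁻¹ ≠ 0 := by
    have : α ^ 3 * α⁻¹ - α * (α ^ 3)⁻¹ = (α ^ 4 - 1) / α ^ 2 := by field_simp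
    rw [this]; exact div_ne_zero h4 (pow_ne_zero _ hα0)
  have hdB : α ^ 2 * α⁻¹ - α * (α ^ 2)⁻¹ ≠ 0 := by
    have : α ^ 2 * α⁻¹ - α * (α ^ 2)⁻¹ = (α ^ 2 - 1) / α := by field_simp
    rw [this]; exact div_ne_zero h2 hα0
  have hdC : α ^ 3 * (α ^ 2)⁻¹ - α ^ 2 * (α ^ 3)⁻¹ ≠ 0 := by
    have : α ^ 3 * (α ^ 2)⁻¹ - α ^ 2 * (α ^ 3)⁻¹ = (α ^ 2 - 1) / α := by field_simp
    rw [this]; exact div_ne_zero h2 hα0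
  have A : lineInt α (α ^ 3) 0 1 = (α ^ 6 - 1) / (α ^ 4 - 1) := by
    simp only [lineInt, brkt, map_pow, hconj, map_zero, mul_zero, zero_mul, map_one, mul_one,
      sub_zero, zero_sub, zero_div, zero_add, inv_pow]
    rw [div_mul_eq_mul_div, div_eq_div_iff hdA h4]
    field_simp
  have B : lineInt α (α ^ 2) 0 1 = (α ^ 4 - 1) / (α ^ 2 - 1) := by
    simp only [lineInt, brkt, map_pow, hconj, map_zero, mul_zero, zero_mul, map_one, mul_one,
      sub_zero, zero_sub, zero_div, zero_add, inv_pow]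
    rw [div_mul_eq_mul_div, div_eq_div_iff hdB h2]
    field_simp
  have C : lineInt (α ^ 2) (α ^ 3) 0 1 = (α ^ 6 - 1) / (α ^ 2 - 1) := by
    simp only [lineInt, brkt, map_pow, hconj, map_zero, mul_zero, zero_mul, map_one, mul_one,
      sub_zero, zero_sub, zero_div, zero_add, inv_pow]
    rw [div_mul_eq_mul_div, div_eq_div_iff hdC h2]
    field_simp
  rw [A, B, C, div_mul_div_comm, mul_comm (α ^ 4 - 1) (α ^ 2 - 1),
    mul_div_mul_right _ _ h4]
end

section
/- Let α be a unit-magnitude complex number such that 1, α, α², α³ are pairwise non-±-equal. Set z₁ = I_{α,α³}(0,1), z₂ = I_{α,α²}(0,1), p₁ = I_{1,α²}(0, z₁), and p₂ = I_{1,α³}(0, z₂). Then z₁ = p₁ · z₂ and z₂ = p₂ · z₁ (i.e., z₁/z₂ = p₁ and z₂/z₁ = p₂). -/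
open Complex

/-- with `z₁ = I_{α,α³}(0,1)`, `z₂ = I_{α,α²}(0,1)`, `p₁ = I_{1,α²}(0,z₁)`,
`p₂ = I_{1,α³}(0,z₂)`, we have `z₁ = p₁·z₂` and `z₂ = p₂·z₁`. -/
theorem stmt19 (α : ℂ) (hα : ‖α‖ = 1)
    (h1a : α ≠ 1) (h1a' : α ≠ -1)
    (h1b : α ^ 2 ≠ 1) (h1b' : α ^ 2 ≠ -1)
    (h1c : α ^ 3 ≠ 1) (h1c' : α ^ 3 ≠ -1)
    (hab : α ≠ α ^ 2) (hab' : α ≠ -α ^ 2)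
    (hac : α ≠ α ^ 3) (hac' : α ≠ -α ^ 3)
    (hbc : α ^ 2 ≠ α ^ 3) (hbc' : α ^ 2 ≠ -α ^ 3)
    (z₁ z₂ p₁ p₂ : ℂ)
    (hz₁ : z₁ = lineInt α (α ^ 3) 0 1) (hz₂ : z₂ = lineInt α (α ^ 2) 0 1)
    (hp₁ : p₁ = lineInt 1 (α ^ 2) 0 z₁) (hp₂ : p₂ = lineInt 1 (α ^ 3) 0 z₂) :
    z₁ = p₁ * z₂ ∧ z₂ = p₂ * z₁ := by
  have hα0 : α ≠ 0 := by
    intro h; rw [h] at hα; simp at hα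
  have hc : (starRingEnd ℂ) α = α⁻¹ := (Complex.inv_eq_conj hα).symm
  have h2 : α ^ 2 - 1 ≠ 0 := fun h => h1b (by linear_combination h)
  have h2' : α ^ 2 + 1 ≠ 0 := fun h => h1b' (by linear_combination h)
  have h3 : α ^ 3 - 1 ≠ 0 := fun h => h1c (by linear_combination h)
  have h3' : α ^ 3 + 1 ≠ 0 := fun h => h1c' (by linear_combination h)
  have h4 : α ^ 4 - 1 ≠ 0 := fun h => by
    have : (α ^ 2 - 1) * (α ^ 2 + 1) = 0 := by linear_combination h
    rcases mul_eq_zero.1 this with h | h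
    · exact h2 h
    · exact h2' h
  have h6 : α ^ 6 - 1 ≠ 0 := fun h => by
    have : (α ^ 3 - 1) * (α ^ 3 + 1) = 0 := by linear_combination h
    rcases mul_eq_zero.1 this with h | h
    · exact h3 h
    · exact h3' h
  have d0 : (-α ^ 5 + α ^ 9 : ℂ) ≠ 0 := fun h => (mul_ne_zero (pow_ne_zero 5 hα0) h4) (by linear_combination h)
  have d1 : (-α ^ 4 + α ^ 6 : ℂ) ≠ 0 := fun h => (mul_ne_zero (pow_ne_zero 4 hα0) h2) (by linear_combination h)
  have d2 : (α ^ 6 - α ^ 10 : ℂ) ≠ 0 := fun h => (neg_ne_zero.2 (mul_ne_zero (pow_ne_zero 6 hα0) h4)) (by linear_combination h)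
  have d3 : (α ^ 4 - α ^ 6 : ℂ) ≠ 0 := fun h => (neg_ne_zero.2 (mul_ne_zero (pow_ne_zero 4 hα0) h2)) (by linear_combination h)
  have d4 : (-1 + α ^ 4 : ℂ) ≠ 0 := fun h => (h4) (by linear_combination h)
  have d5 : (-1 + α ^ 2 : ℂ) ≠ 0 := fun h => (h2) (by linear_combination h)
  have d6 : (-1 + α ^ 6 : ℂ) ≠ 0 := fun h => (h6) (by linear_combination h)
  have d7 : (-α ^ 5 + α ^ 11 : ℂ) ≠ 0 := fun h => (mul_ne_zero (pow_ne_zero 5 hα0) h6) (by linear_combination h)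
  have d8 : (-α ^ 4 + α ^ 10 : ℂ) ≠ 0 := fun h => (mul_ne_zero (pow_ne_zero 4 hα0) h6) (by linear_combination h)
  have d9 : (-α ^ 6 + α ^ 10 : ℂ) ≠ 0 := fun h => (mul_ne_zero (pow_ne_zero 6 hα0) h4) (by linear_combination h)
  have d10 : (-α ^ 6 + α ^ 12 : ℂ) ≠ 0 := fun h => (mul_ne_zero (pow_ne_zero 6 hα0) h6) (by linear_combination h)
  have hz1 : z₁ = (α ^ 6 - 1) / (α ^ 4 - 1) := by
    rw [hz₁]
    simp only [lineInt, brkt, map_zero, map_one, map_pow, hc, mul_zero, zero_mul,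
      sub_zero, zero_sub, mul_one, one_mul, zero_div, zero_add, neg_zero, zero_mul, add_zero]
    field_simp
  have hz2 : z₂ = (α ^ 4 - 1) / (α ^ 2 - 1) := by
    rw [hz₂]
    simp only [lineInt, brkt, map_zero, map_one, map_pow, hc, mul_zero, zero_mul,
      sub_zero, zero_sub, mul_one, one_mul, zero_div, zero_add, neg_zero, zero_mul, add_zero]
    field_simp
  have hcz1 : (starRingEnd ℂ) z₁ = α⁻¹ ^ 2 * z₁ := by
    rw [hz1]
    simp only [map_div₀, map_sub, map_one, map_pow, hc]
    field_simp
    linear_combination (α ^ 6 - 1) * mul_inv_cancel₀ (show (1 - α ^ 4 : ℂ) ≠ 0 from fun h => h4 (by linear_combination -h))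
  have hcz2 : (starRingEnd ℂ) z₂ = α⁻¹ ^ 2 * z₂ := by
    rw [hz2]
    simp only [map_div₀, map_sub, map_one, map_pow, hc]
    field_simp
    ring
  have hp1 : p₁ = z₁ * (α ^ 2 - 1) / (α ^ 4 - 1) := by
    rw [hp₁]
    simp only [lineInt, brkt, map_zero, map_one, map_pow, hc, hcz1, mul_zero, zero_mul,
      sub_zero, zero_sub, mul_one, one_mul, zero_div, zero_add, neg_zero, add_zero]
    field_simp
  have hp2 : p₂ = z₂ * (α ^ 4 - 1) / (α ^ 6 - 1) := by
    rw [hp₂]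
    simp only [lineInt, brkt, map_zero, map_one, map_pow, hc, hcz2, mul_zero, zero_mul,
      sub_zero, zero_sub, mul_one, one_mul, zero_div, zero_add, neg_zero, add_zero]
    field_simp
  constructor
  · rw [hp1, hz1, hz2]; field_simp
  · rw [hp2, hz1, hz2]; field_simp
end
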